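/- Picard-iteration increment bound: let T > 0, let K : [0,T]×[0,T] → ℂ, χ, Δ : [0,T] → ℂ be continuous, and let p, q : [0,T] → ℝ be continuous and nonnegative with |K(t,τ)| ≤ p(t) q(τ) whenever 0 ≤ τ ≤ t ≤ T. Set 𝒦 := sup_{0≤τ≤T} q(τ), 𝒦₀ := sup_{0≤τ≤T} p(τ)q(τ), φ(t) := ∫₀ᵗ |Δ(τ)| dτ, ψ(t) := ∫₀ᵗ |χ(τ)| dτ. Define iterates ε₀ := 0 and ε_{m+1}(t) := ∫₀ᵗ K(t,τ) ( χ(τ) ε_m(τ) + Δ(τ) ) dτ. Then for every m ≥ 0 and t ∈ [0,T]: |ε_{m+1}(t) − ε_m(t)| ≤ p(t) · 𝒦 · φ(t) · (𝒦₀ ψ(t))^m / m!. -/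

import Mathlib

/-- Picard-iteration increment bound: with `|K(t,τ)| ≤ p(t)q(τ)` for `0 ≤ τ ≤ t ≤ T`,
`𝒦 = sup q`, `𝒦₀ = sup pq`, `φ(t) = ∫₀ᵗ|Δ|`, `ψ(t) = ∫₀ᵗ|χ|`, the iterates
`ε₀ = 0`, `ε_{m+1}(t) = ∫₀ᵗ K(t,τ)(χ(τ)ε_m(τ)+Δ(τ))dτ` satisfy
`|ε_{m+1}(t) − ε_m(t)| ≤ p(t)·𝒦·φ(t)·(𝒦₀ψ(t))^m/m!`. -/
theorem picard_increment_bound (T : ℝ) (hT : 0 < T)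
    (K : ℝ → ℝ → ℂ) (χ Δ : ℝ → ℂ) (p q : ℝ → ℝ)
    (hKc : ContinuousOn (fun z : ℝ × ℝ => K z.1 z.2) (Set.Icc 0 T ×ˢ Set.Icc 0 T))
    (hχc : ContinuousOn χ (Set.Icc 0 T)) (hΔc : ContinuousOn Δ (Set.Icc 0 T))
    (hpc : ContinuousOn p (Set.Icc 0 T)) (hqc : ContinuousOn q (Set.Icc 0 T))
    (hp0 : ∀ t ∈ Set.Icc (0:ℝ) T, 0 ≤ p t) (hq0 : ∀ t ∈ Set.Icc (0:ℝ) T, 0 ≤ q t)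
    (hKb : ∀ t τ : ℝ, 0 ≤ τ → τ ≤ t → t ≤ T → ‖K t τ‖ ≤ p t * q τ)
    (ε : ℕ → ℝ → ℂ)
    (hε0 : ∀ t : ℝ, ε 0 t = 0)
    (hεs : ∀ (m : ℕ) (t : ℝ),
      ε (m + 1) t = ∫ τ in (0:ℝ)..t, K t τ * (χ τ * ε m τ + Δ τ)) :
    ∀ (m : ℕ), ∀ t ∈ Set.Icc (0:ℝ) T,
      ‖ε (m + 1) t - ε m t‖ ≤
        p t * sSup (q '' Set.Icc 0 T) * (∫ τ in (0:ℝ)..t, ‖Δ τ‖) *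
          (sSup ((fun τ => p τ * q τ) '' Set.Icc 0 T) *
            ∫ τ in (0:ℝ)..t, ‖χ τ‖) ^ m / (Nat.factorial m) := by
  -- clamp to [0,T]
  set c : ℝ → ℝ := fun x => min (max x 0) T with hc
  have hcc : Continuous c := (continuous_id.max continuous_const).min continuous_const
  have hcmem : ∀ x, c x ∈ Set.Icc (0:ℝ) T :=
    fun x => ⟨le_min (le_max_right x 0) hT.le, min_le_right _ _⟩
  have hceq : ∀ x ∈ Set.Icc (0:ℝ) T, c x = x := by
    intro x hx
    simp only [hc, max_eq_left hx.1, min_eq_left hx.2]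
  set χ' : ℝ → ℂ := fun x => χ (c x) with hχ'def
  set Δ' : ℝ → ℂ := fun x => Δ (c x) with hΔ'def
  set q' : ℝ → ℝ := fun x => q (c x) with hq'def
  set p' : ℝ → ℝ := fun x => p (c x) with hp'def
  set K' : ℝ → ℝ → ℂ := fun t τ => K (c t) (c τ) with hK'def
  have hχ' : Continuous χ' := hχc.comp_continuous hcc hcmem
  have hΔ' : Continuous Δ' := hΔc.comp_continuous hcc hcmem
  have hq' : Continuous q' := hqc.comp_continuous hcc hcmem
  have hp' : Continuous p' := hpc.comp_continuous hcc hcmem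
  have hK' : Continuous fun z : ℝ × ℝ => K' z.1 z.2 :=
    hKc.comp_continuous ((hcc.comp continuous_fst).prodMk (hcc.comp continuous_snd))
      (fun z => ⟨hcmem _, hcmem _⟩)
  -- primed iterates
  set ε' : ℕ → ℝ → ℂ :=
    fun m => Nat.rec (motive := fun _ => ℝ → ℂ) (fun _ => 0)
      (fun _ f t => ∫ τ in (0:ℝ)..t, K' t τ * (χ' τ * f τ + Δ' τ)) m with hε'def
  have hε'0 : ∀ t, ε' 0 t = 0 := fun _ => rfl
  have hε's : ∀ m t, ε' (m + 1) t = ∫ τ in (0:ℝ)..t, K' t τ * (χ' τ * ε' m τ + Δ' τ) :=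
    fun _ _ => rfl
  -- continuity of the iterates
  have hε'c : ∀ m, Continuous (ε' m) := by
    intro m
    induction m with
    | zero => exact continuous_const
    | succ m ih =>
      have hintc : Continuous (Function.uncurry fun t τ => K' t τ * (χ' τ * ε' m τ + Δ' τ)) :=
        hK'.mul (((hχ'.comp continuous_snd).mul (ih.comp continuous_snd)).add
          (hΔ'.comp continuous_snd))
      exact intervalIntegral.continuous_parametric_intervalIntegral_of_continuous hintc
        continuous_id
  -- equality of iterates on [0,T]
  have heq : ∀ m, ∀ t ∈ Set.Icc (0:ℝ) T, ε m t = ε' m t := by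
    intro m
    induction m with
    | zero => intro t _; rw [hε0, hε'0]
    | succ m ih =>
      intro t ht
      rw [hεs, hε's]
      apply intervalIntegral.integral_congr
      intro τ hτ
      rw [Set.uIcc_of_le ht.1] at hτ
      have hτT : τ ∈ Set.Icc (0:ℝ) T := ⟨hτ.1, hτ.2.trans ht.2⟩
      simp only [hK'def, hχ'def, hΔ'def, hceq t ht, hceq τ hτT, ih τ hτT]
  set 𝒦 : ℝ := sSup (q '' Set.Icc 0 T) with h𝒦def
  set 𝒦₀ : ℝ := sSup ((fun τ => p τ * q τ) '' Set.Icc 0 T) with h𝒦₀def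
  have h0T : (0:ℝ) ∈ Set.Icc (0:ℝ) T := ⟨le_refl 0, hT.le⟩
  have hqb : ∀ τ ∈ Set.Icc (0:ℝ) T, q τ ≤ 𝒦 := fun τ hτ =>
    le_csSup (isCompact_Icc.image_of_continuousOn hqc).bddAbove ⟨τ, hτ, rfl⟩
  have hpqb : ∀ τ ∈ Set.Icc (0:ℝ) T, p τ * q τ ≤ 𝒦₀ := fun τ hτ =>
    le_csSup (isCompact_Icc.image_of_continuousOn (hpc.mul hqc)).bddAbove ⟨τ, hτ, rfl⟩
  have h𝒦0 : 0 ≤ 𝒦 := (hq0 0 h0T).trans (hqb 0 h0T)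
  have h𝒦₀0 : 0 ≤ 𝒦₀ := (mul_nonneg (hp0 0 h0T) (hq0 0 h0T)).trans (hpqb 0 h0T)
  set φ : ℝ → ℝ := fun t => ∫ τ in (0:ℝ)..t, ‖Δ' τ‖ with hφdef
  set ψ : ℝ → ℝ := fun t => ∫ τ in (0:ℝ)..t, ‖χ' τ‖ with hψdef
  have hΔ'a : Continuous fun τ => ‖Δ' τ‖ := continuous_norm.comp hΔ'
  have hχ'a : Continuous fun τ => ‖χ' τ‖ := continuous_norm.comp hχ'
  have hψc : Continuous ψ :=
    intervalIntegral.continuous_primitive (μ := MeasureTheory.volume)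
      (fun a b => hχ'a.intervalIntegrable a b) 0
  have hφ0 : ∀ t, 0 ≤ t → 0 ≤ φ t := fun t ht =>
    intervalIntegral.integral_nonneg ht (fun τ _ => norm_nonneg _)
  have hψ0 : ∀ t, 0 ≤ t → 0 ≤ ψ t := fun t ht =>
    intervalIntegral.integral_nonneg ht (fun τ _ => norm_nonneg _)
  have hφmono : ∀ a b : ℝ, a ≤ b → φ a ≤ φ b := by
    intro a b hab
    have h1 := intervalIntegral.integral_add_adjacent_intervals
      (hΔ'a.intervalIntegrable (μ := MeasureTheory.volume) 0 a) (hΔ'a.intervalIntegrable a b)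
    have h2 : 0 ≤ ∫ τ in a..b, ‖Δ' τ‖ :=
      intervalIntegral.integral_nonneg hab (fun τ _ => norm_nonneg _)
    simp only [hφdef]
    rw [← h1]
    linarith
  -- FTC computation
  have hFTC : ∀ (m : ℕ) (t : ℝ),
      (∫ τ in (0:ℝ)..t, ‖χ' τ‖ * ψ τ ^ m) = ψ t ^ (m + 1) / (m + 1) := by
    intro m t
    have hd : ∀ x ∈ Set.uIcc (0:ℝ) t,
        HasDerivAt (fun u => ψ u ^ (m + 1) / (m + 1))
          (‖χ' x‖ * ψ x ^ m) x := by
      intro x _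
      have h1 : HasDerivAt ψ (‖χ' x‖) x :=
        intervalIntegral.integral_hasDerivAt_right (hχ'a.intervalIntegrable 0 x)
          (hχ'a.stronglyMeasurableAtFilter _ _) hχ'a.continuousAt
      have h2 : HasDerivAt (fun u => ψ u ^ (m + 1) / ((m : ℝ) + 1))
          (((m + 1 : ℕ) : ℝ) * ψ x ^ (m + 1 - 1) * ‖χ' x‖ / ((m : ℝ) + 1)) x :=
        (h1.pow (m + 1)).div_const ((m : ℝ) + 1)
      convert h2 using 1
      rw [Nat.add_sub_cancel]
      push_cast
      field_simp
    rw [intervalIntegral.integral_eq_sub_of_hasDerivAt hd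
      ((hχ'a.mul (hψc.pow m)).intervalIntegrable 0 t)]
    have hψzero : ψ 0 = 0 := intervalIntegral.integral_same
    rw [hψzero]
    simp
  -- the main induction (for the primed iterates)
  have main : ∀ m, ∀ t ∈ Set.Icc (0:ℝ) T,
      ‖ε' (m + 1) t - ε' m t‖ ≤
        p t * 𝒦 * φ t * (𝒦₀ * ψ t) ^ m / (Nat.factorial m) := by
    intro m
    induction m with
    | zero =>
      intro t ht
      rw [hε's, hε'0, sub_zero]
      have hle : ‖∫ τ in (0:ℝ)..t, K' t τ * (χ' τ * ε' 0 τ + Δ' τ)‖ ≤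
          ∫ τ in (0:ℝ)..t, ‖K' t τ * (χ' τ * ε' 0 τ + Δ' τ)‖ := by
        refine le_trans (intervalIntegral.norm_integral_le_integral_norm ht.1) ?_
        simp
      refine le_trans hle ?_
      have hle2 : (∫ τ in (0:ℝ)..t, ‖K' t τ * (χ' τ * ε' 0 τ + Δ' τ)‖) ≤
          ∫ τ in (0:ℝ)..t, p t * 𝒦 * ‖Δ' τ‖ := by
        apply intervalIntegral.integral_mono_on ht.1
        · exact (continuous_norm.comp
            (hK'.comp (continuous_const.prodMk continuous_id)
              |>.mul (((hχ'.mul (hε'c 0)).add hΔ')))).intervalIntegrable 0 t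
        · exact ((continuous_const.mul hΔ'a)).intervalIntegrable 0 t
        · intro τ hτ
          have hτT : τ ∈ Set.Icc (0:ℝ) T := ⟨hτ.1, hτ.2.trans ht.2⟩
          rw [hε'0]
          have hKeq : K' t τ = K t τ := by
            simp only [hK'def, hceq t ht, hceq τ hτT]
          rw [norm_mul, hKeq]
          simp only [mul_zero, zero_add]
          have h1 : ‖K t τ‖ ≤ p t * q τ := hKb t τ hτ.1 hτ.2 ht.2
          have h2 : q τ ≤ 𝒦 := hqb τ hτT
          have h3 : ‖Δ' τ‖ ≤ ‖Δ' τ‖ := le_refl _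
          calc ‖K t τ‖ * ‖Δ' τ‖
              ≤ (p t * q τ) * ‖Δ' τ‖ :=
                mul_le_mul_of_nonneg_right h1 (norm_nonneg _)
            _ ≤ (p t * 𝒦) * ‖Δ' τ‖ :=
                mul_le_mul_of_nonneg_right
                  (mul_le_mul_of_nonneg_left h2 (hp0 t ht)) (norm_nonneg _)
      refine le_trans hle2 ?_
      rw [intervalIntegral.integral_const_mul]
      simp [hφdef]
    | succ m ih =>
      intro t ht
      have h0t := ht.1
      -- rewrite the difference as a single integral
      have hint1 : IntervalIntegrable (fun τ => K' t τ * (χ' τ * ε' (m + 1) τ + Δ' τ))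
          MeasureTheory.volume 0 t :=
        ((hK'.comp (continuous_const.prodMk continuous_id)).mul
          (((hχ'.mul (hε'c (m + 1))).add hΔ'))).intervalIntegrable 0 t
      have hint2 : IntervalIntegrable (fun τ => K' t τ * (χ' τ * ε' m τ + Δ' τ))
          MeasureTheory.volume 0 t :=
        ((hK'.comp (continuous_const.prodMk continuous_id)).mul
          (((hχ'.mul (hε'c m)).add hΔ'))).intervalIntegrable 0 t
      have key : ε' (m + 1 + 1) t - ε' (m + 1) t =
          ∫ τ in (0:ℝ)..t, K' t τ * (χ' τ * (ε' (m + 1) τ - ε' m τ)) := by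
        rw [hε's (m+1) t, hε's m t, ← intervalIntegral.integral_sub hint1 hint2]
        apply intervalIntegral.integral_congr
        intro τ _
        ring
      rw [key]
      have hcontd : Continuous fun τ => K' t τ * (χ' τ * (ε' (m + 1) τ - ε' m τ)) :=
        (hK'.comp (continuous_const.prodMk continuous_id)).mul
          (hχ'.mul ((hε'c (m + 1)).sub (hε'c m)))
      have hle : ‖∫ τ in (0:ℝ)..t, K' t τ * (χ' τ * (ε' (m + 1) τ - ε' m τ))‖ ≤
          ∫ τ in (0:ℝ)..t, ‖K' t τ * (χ' τ * (ε' (m + 1) τ - ε' m τ))‖ := by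
        refine le_trans (intervalIntegral.norm_integral_le_integral_norm h0t) ?_
        simp
      refine le_trans hle ?_
      set C : ℝ := p t * 𝒦 * φ t * 𝒦₀ ^ (m + 1) / (Nat.factorial m) with hCdef
      have hle2 : (∫ τ in (0:ℝ)..t, ‖K' t τ * (χ' τ * (ε' (m + 1) τ - ε' m τ))‖) ≤
          ∫ τ in (0:ℝ)..t, C * (‖χ' τ‖ * ψ τ ^ m) := by
        apply intervalIntegral.integral_mono_on h0t
        · exact (continuous_norm.comp hcontd).intervalIntegrable 0 t
        · exact (continuous_const.mul (hχ'a.mul (hψc.pow m))).intervalIntegrable 0 t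
        · intro τ hτ
          have hτT : τ ∈ Set.Icc (0:ℝ) T := ⟨hτ.1, hτ.2.trans ht.2⟩
          have hKeq : K' t τ = K t τ := by
            simp only [hK'def, hceq t ht, hceq τ hτT]
          rw [norm_mul, norm_mul, hKeq]
          have h1 : ‖K t τ‖ ≤ p t * q τ := hKb t τ hτ.1 hτ.2 ht.2
          have h2 : ‖ε' (m + 1) τ - ε' m τ‖ ≤
              p τ * 𝒦 * φ τ * (𝒦₀ * ψ τ) ^ m / (Nat.factorial m) := ih τ hτT
          have hpq : p τ * q τ ≤ 𝒦₀ := hpqb τ hτT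
          have hφτ : φ τ ≤ φ t := hφmono τ t hτ.2
          have hψτ : 0 ≤ ψ τ := hψ0 τ hτ.1
          have hφτ0 : 0 ≤ φ τ := hφ0 τ hτ.1
          have hpt : 0 ≤ p t := hp0 t ht
          have hpτ : 0 ≤ p τ := hp0 τ hτT
          have hqτ : 0 ≤ q τ := hq0 τ hτT
          have hχa0 : 0 ≤ ‖χ' τ‖ := norm_nonneg _
          have hm0 : (0:ℝ) < Nat.factorial m := by positivity
          have step1 : ‖K t τ‖ * (‖χ' τ‖ *
              ‖ε' (m + 1) τ - ε' m τ‖) ≤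
              (p t * q τ) * (‖χ' τ‖ *
                (p τ * 𝒦 * φ τ * (𝒦₀ * ψ τ) ^ m / (Nat.factorial m))) := by
            apply mul_le_mul h1 (mul_le_mul_of_nonneg_left h2 hχa0)
              (mul_nonneg hχa0 (norm_nonneg _)) (mul_nonneg hpt hqτ)
          refine le_trans step1 ?_
          rw [mul_pow]
          have hrw1 : (p t * q τ) * (‖χ' τ‖ *
              (p τ * 𝒦 * φ τ * (𝒦₀ ^ m * ψ τ ^ m) / (Nat.factorial m))) =
              (p t * 𝒦 * ‖χ' τ‖ * ψ τ ^ m * 𝒦₀ ^ m / (Nat.factorial m)) *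
                ((p τ * q τ) * φ τ) := by ring
          have hrw2 : C * (‖χ' τ‖ * ψ τ ^ m) =
              (p t * 𝒦 * ‖χ' τ‖ * ψ τ ^ m * 𝒦₀ ^ m / (Nat.factorial m)) *
                (𝒦₀ * φ t) := by rw [hCdef]; ring
          rw [hrw1, hrw2]
          apply mul_le_mul_of_nonneg_left
          · exact mul_le_mul hpq hφτ hφτ0 h𝒦₀0
          · have : 0 ≤ p t * 𝒦 * ‖χ' τ‖ * ψ τ ^ m * 𝒦₀ ^ m := by
              apply mul_nonneg (mul_nonneg (mul_nonneg (mul_nonneg hpt h𝒦0) hχa0)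
                (pow_nonneg hψτ m)) (pow_nonneg h𝒦₀0 m)
            exact div_nonneg this hm0.le
      refine le_trans hle2 ?_
      rw [intervalIntegral.integral_const_mul, hFTC]
      rw [Nat.factorial_succ]
      have hm0 : (0:ℝ) < Nat.factorial m := by positivity
      rw [hCdef, mul_pow]
      push_cast
      field_simp
      ring_nf
      apply le_of_eq
      ring
  -- transfer back to the original data
  intro m t ht
  rw [heq (m + 1) t ht, heq m t ht]
  have hΔint : (∫ τ in (0:ℝ)..t, ‖Δ τ‖) = φ t := by
    apply intervalIntegral.integral_congr
    intro τ hτ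
    rw [Set.uIcc_of_le ht.1] at hτ
    have hτT : τ ∈ Set.Icc (0:ℝ) T := ⟨hτ.1, hτ.2.trans ht.2⟩
    simp only [hΔ'def, hceq τ hτT]
  have hχint : (∫ τ in (0:ℝ)..t, ‖χ τ‖) = ψ t := by
    apply intervalIntegral.integral_congr
    intro τ hτ
    rw [Set.uIcc_of_le ht.1] at hτ
    have hτT : τ ∈ Set.Icc (0:ℝ) T := ⟨hτ.1, hτ.2.trans ht.2⟩
    simp only [hχ'def, hceq τ hτT]
  rw [hΔint, hχint]
  exact main m t ht
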